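/- Derivative of a Bézier curve with shifted knots: for every natural number n ≥ 1, real parameters α, β with 0 ≤ α ≤ β, control points P_0, …, P_n in ℝ^d (or any real normed vector space), and every real t, the curve P(t) = ∑_{k=0}^{n} P_k · G_{n,α,β}^k(t) is differentiable and P′(t) = (n+β) · ∑_{k=0}^{n−1} (P_{k+1} − P_k) · H_k(t). -/

import Mathlib

/-- Bernstein functions with shifted knots of degree `n`:
`G_{n,α,β}^k(t) = C(n,k) ((n+β)/n)^n (t - α/(n+β))^k ((n+α)/(n+β) - t)^(n-k)`. -/
noncomputable def G (n : ℕ) (α β : ℝ) (k : ℕ) (t : ℝ) : ℝ :=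
  (n.choose k : ℝ) * ((n + β) / n) ^ n * (t - α / (n + β)) ^ k *
    ((n + α) / (n + β) - t) ^ (n - k)

/-- Degree-(n-1) Bernstein functions on the same shifted interval:
`H_j(t) = C(n-1,j) ((n+β)/n)^(n-1) (t - α/(n+β))^j ((n+α)/(n+β) - t)^(n-1-j)`. -/
noncomputable def H (n : ℕ) (α β : ℝ) (j : ℕ) (t : ℝ) : ℝ :=
  ((n - 1).choose j : ℝ) * ((n + β) / n) ^ (n - 1) * (t - α / (n + β)) ^ j *
    ((n + α) / (n + β) - t) ^ (n - 1 - j)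

lemma nat1 (n k : ℕ) (h1 : 1 ≤ k) : k * n.choose k = n * (n-1).choose (k-1) := by
  rcases Nat.eq_zero_or_pos n with rfl | hn
  · simp [Nat.choose_eq_zero_of_lt h1]
  rcases Nat.lt_or_ge n k with h | h
  · rw [Nat.choose_eq_zero_of_lt h, Nat.choose_eq_zero_of_lt (by omega)]
    simp
  · obtain ⟨m, rfl⟩ : ∃ m, n = m + 1 := ⟨n - 1, by omega⟩
    obtain ⟨j, rfl⟩ : ∃ j, k = j + 1 := ⟨k - 1, by omega⟩
    simp only [Nat.add_sub_cancel]
    rw [Nat.add_one_mul_choose_eq]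
    exact mul_comm _ _

lemma nat2 (n k : ℕ) (hn : 1 ≤ n) (h : k ≤ n) :
    (n - k) * n.choose k = n * (n-1).choose k := by
  rcases eq_or_lt_of_le h with rfl | h
  · have h0 : (k-1).choose k = 0 := Nat.choose_eq_zero_of_lt (by omega)
    simp [h0]
  · have hk' : k ≤ n - 1 := by omega
    have key := nat1 n (n - k) (by omega)
    rw [Nat.choose_symm (Nat.le_of_lt h)] at key
    rw [key]
    congr 1
    rw [show n - k - 1 = (n-1) - k by omega, Nat.choose_symm hk']

lemma hasDerivAt_G (n : ℕ) (hn : 1 ≤ n) (α β : ℝ)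
    (k : ℕ) (hk : k ≤ n) (t : ℝ) :
    HasDerivAt (G n α β k)
      (((n : ℝ) + β) * ((if k = 0 then (0:ℝ) else H n α β (k-1) t) - H n α β k t)) t := by
  have hn0 : (n : ℝ) ≠ 0 := Nat.cast_ne_zero.mpr (by omega)
  have hcn : (n:ℝ) * (((n:ℝ) + β) / n) = (n:ℝ) + β := by field_simp
  have h1 : HasDerivAt (fun s : ℝ => (s - α / ((n:ℝ)+β)) ^ k)
      ((k : ℝ) * (t - α / ((n:ℝ)+β)) ^ (k-1) * 1) t :=
    ((hasDerivAt_id t).sub_const _).pow k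
  have h2 : HasDerivAt (fun s : ℝ => (((n:ℝ)+α)/((n:ℝ)+β) - s) ^ (n-k))
      (((n-k : ℕ) : ℝ) * (((n:ℝ)+α)/((n:ℝ)+β) - t) ^ (n-k-1) * (-1)) t := by
    simpa using ((hasDerivAt_const t (((n:ℝ)+α)/((n:ℝ)+β))).fun_sub (hasDerivAt_id t)).fun_pow (n-k)
  have h3 := (h1.fun_mul h2).const_mul ((n.choose k : ℝ) * (((n:ℝ)+β)/n) ^ n)
  have hfun : (fun s => (n.choose k : ℝ) * (((n:ℝ)+β)/n) ^ n *
      ((s - α / ((n:ℝ)+β)) ^ k * (((n:ℝ)+α)/((n:ℝ)+β) - s) ^ (n-k))) = G n α β k := by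
    funext s; simp [G, mul_assoc]
  rw [hfun] at h3
  refine h3.congr_deriv (Eq.symm ?_)
  have hcpow : (((n:ℝ)+β)/n) ^ n = (((n:ℝ)+β)/n) ^ (n-1) * (((n:ℝ)+β)/n) := by
    rw [← pow_succ]; congr 1; omega
  rcases Nat.eq_zero_or_pos k with rfl | hk1
  · rw [if_pos rfl]
    simp only [H, Nat.sub_zero, Nat.choose_zero_right, Nat.cast_one, Nat.cast_zero, pow_zero]
    rw [hcpow]
    linear_combination ((((n:ℝ)+β)/n) ^ (n-1) * ((((n:ℝ)+α)/((n:ℝ)+β) - t)) ^ (n-1)) * hcn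
  · rw [if_neg (by omega)]
    have hcast1 : ((k : ℝ)) * (n.choose k : ℝ) = (n:ℝ) * ((n-1).choose (k-1) : ℝ) := by
      exact_mod_cast nat1 n k hk1
    have hcast2 : (((n - k : ℕ)) : ℝ) * (n.choose k : ℝ)
        = (n:ℝ) * ((n-1).choose k : ℝ) := by
      exact_mod_cast nat2 n k hn hk
    have e1 : n - 1 - (k - 1) = n - k := by omega
    have e2 : n - 1 - k = n - k - 1 := by omega
    simp only [H, e1, e2]
    rw [hcpow]
    linear_combination
      -((((n:ℝ)+β)/n) ^ (n-1) * (((n:ℝ)+β)/n) * (t - α / ((n:ℝ)+β)) ^ (k-1)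
          * ((((n:ℝ)+α)/((n:ℝ)+β) - t)) ^ (n-k)) * hcast1
      + ((((n:ℝ)+β)/n) ^ (n-1) * (((n:ℝ)+β)/n) * (t - α / ((n:ℝ)+β)) ^ k
          * ((((n:ℝ)+α)/((n:ℝ)+β) - t)) ^ (n-k-1)) * hcast2
      - ((((n:ℝ)+β)/n) ^ (n-1) * (((n-1).choose (k-1) : ℝ) * (t - α / ((n:ℝ)+β)) ^ (k-1)
            * ((((n:ℝ)+α)/((n:ℝ)+β) - t)) ^ (n-k)
          - ((n-1).choose k : ℝ) * (t - α / ((n:ℝ)+β)) ^ k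
            * ((((n:ℝ)+α)/((n:ℝ)+β) - t)) ^ (n-k-1))) * hcn

/-- Derivative of a Bézier curve with shifted knots. -/
theorem bezier_deriv (n : ℕ) (hn : 1 ≤ n) (α β : ℝ) (hα : 0 ≤ α) (hαβ : α ≤ β)
    {E : Type*} [NormedAddCommGroup E] [NormedSpace ℝ E] (P : ℕ → E) (t : ℝ) :
    HasDerivAt (fun s => ∑ k ∈ Finset.range (n + 1), G n α β k s • P k)
      (((n : ℝ) + β) • ∑ k ∈ Finset.range n, H n α β k t • (P (k + 1) - P k)) t := by
  have hG : ∀ k ∈ Finset.range (n+1),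
      HasDerivAt (fun s => G n α β k s • P k)
        ((((n : ℝ) + β) * ((if k = 0 then (0:ℝ) else H n α β (k-1) t) - H n α β k t)) • P k) t := by
    intro k hk
    exact (hasDerivAt_G n hn α β k (by simpa [Nat.lt_succ_iff] using hk) t).smul_const (P k)
  have hsum := HasDerivAt.fun_sum hG
  convert hsum using 1
  have hHn : H n α β n t = 0 := by
    simp [H, Nat.choose_eq_zero_of_lt (show n - 1 < n by omega)]
  calc (((n : ℝ) + β) • ∑ k ∈ Finset.range n, H n α β k t • (P (k + 1) - P k))
      = ∑ k ∈ Finset.range n, (((n : ℝ) + β) • (H n α β k t • P (k + 1))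
          - ((n : ℝ) + β) • (H n α β k t • P k)) := by
        rw [Finset.smul_sum]
        exact Finset.sum_congr rfl fun k _ => by rw [smul_sub, smul_sub]
    _ = (∑ k ∈ Finset.range n, ((n : ℝ) + β) • (H n α β k t • P (k + 1)))
        - ∑ k ∈ Finset.range n, ((n : ℝ) + β) • (H n α β k t • P k) := by
        rw [Finset.sum_sub_distrib]
    _ = (∑ k ∈ Finset.range (n+1), ((n : ℝ) + β) • ((if k = 0 then (0:ℝ) else H n α β (k-1) t) • P k))
        - ∑ k ∈ Finset.range (n+1), ((n : ℝ) + β) • (H n α β k t • P k) := by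
        congr 1
        · rw [Finset.sum_range_succ' (fun k => ((n : ℝ) + β) • ((if k = 0 then (0:ℝ) else H n α β (k-1) t) • P k)) n]
          simp
        · rw [Finset.sum_range_succ, hHn]
          simp
    _ = ∑ k ∈ Finset.range (n+1),
          (((n : ℝ) + β) * ((if k = 0 then (0:ℝ) else H n α β (k-1) t) - H n α β k t)) • P k := by
        rw [← Finset.sum_sub_distrib]
        exact Finset.sum_congr rfl fun k _ => by
          rw [mul_smul, sub_smul, smul_sub]
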